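/- If λ ∈ [0, 9] and (x_m) is the sequence defined by x_0 = λ and x_{m+1} = 3 − √(9 − x_m), then the sequence (6^m · x_m) converges to a finite limit. -/
import Mathlib

open Filter

private lemma sqrt9 : Real.sqrt 9 = 3 := by
  rw [show (9:ℝ) = 3^2 by norm_num, Real.sqrt_sq (by norm_num)]

private lemma f_nonneg' {t : ℝ} (h0 : 0 ≤ t) : 0 ≤ 3 - Real.sqrt (9 - t) := by
  have h : Real.sqrt (9 - t) ≤ Real.sqrt 9 := Real.sqrt_le_sqrt (by linarith)
  rw [sqrt9] at h; linarith

private lemma f_le3 {t : ℝ} : 3 - Real.sqrt (9 - t) ≤ 3 := by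
  have := Real.sqrt_nonneg (9 - t); linarith

private lemma f_lb {t : ℝ} (h0 : 0 ≤ t) (h9 : t ≤ 9) :
    t / 6 ≤ 3 - Real.sqrt (9 - t) := by
  have h : Real.sqrt (9 - t) ≤ 3 - t / 6 := by
    rw [show (3 - t/6) = Real.sqrt ((3 - t/6)^2) from
      (Real.sqrt_sq (by linarith)).symm]
    apply Real.sqrt_le_sqrt; nlinarith
  linarith

private lemma f_ub5 {t : ℝ} (h0 : 0 ≤ t) (h3 : t ≤ 3) :
    3 - Real.sqrt (9 - t) ≤ t / 5 := by
  have h : 3 - t / 5 ≤ Real.sqrt (9 - t) := by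
    rw [Real.le_sqrt (by linarith) (by linarith)]
    nlinarith
  linarith

private lemma f_ub6 {t : ℝ} (h0 : 0 ≤ t) (h3 : t ≤ 3) :
    3 - Real.sqrt (9 - t) ≤ t / 6 + t^2 / 36 := by
  have h : 3 - t / 6 - t^2/36 ≤ Real.sqrt (9 - t) := by
    rw [Real.le_sqrt (by nlinarith) (by linarith)]
    nlinarith [sq_nonneg t, sq_nonneg (t-3), sq_nonneg (t*t)]
  linarith

theorem sierpinski_tetrahedron_decimation_limit_exists
    (lam : ℝ) (hlam : lam ∈ Set.Icc (0 : ℝ) 9)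
    (x : ℕ → ℝ) (hx0 : x 0 = lam)
    (hrec : ∀ m : ℕ, x (m + 1) = 3 - Real.sqrt (9 - x m)) :
    ∃ L : ℝ, Tendsto (fun m : ℕ => (6 : ℝ) ^ m * x m) atTop (nhds L) := by
  obtain ⟨hl0, hl9⟩ := hlam
  -- basic bounds
  have hb : ∀ m, 0 ≤ x m ∧ x m ≤ 9 := by
    intro m
    induction m with
    | zero => rw [hx0]; exact ⟨hl0, hl9⟩
    | succ n ih =>
      rw [hrec n]
      exact ⟨f_nonneg' ih.1, le_trans f_le3 (by norm_num)⟩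
  have h3 : ∀ m, x (m + 1) ≤ 3 := by
    intro m; rw [hrec m]; exact f_le3
  -- geometric decay
  have hgeo : ∀ m, x (m + 1) ≤ 3 * (1/5 : ℝ) ^ m := by
    intro m
    induction m with
    | zero => simpa using h3 0
    | succ n ih =>
      rw [hrec (n+1)]
      have h5 := f_ub5 (hb (n+1)).1 (h3 n)
      have : (3 : ℝ) * (1/5)^(n+1) = (3 * (1/5)^n) / 5 := by ring
      rw [this]
      linarith
  set y : ℕ → ℝ := fun m => (6 : ℝ) ^ m * x m with hy
  -- monotone
  have hmono : Monotone y := by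
    apply monotone_nat_of_le_succ
    intro n
    have hlb := f_lb (hb n).1 (hb n).2
    have : y (n+1) = 6^(n+1) * (3 - Real.sqrt (9 - x n)) := by
      simp [hy, hrec n]
    rw [this]
    have h6 : (0:ℝ) < 6^(n+1) := by positivity
    have : (6:ℝ)^n * x n = 6^(n+1) * (x n / 6) := by ring
    simp only [hy]
    rw [this]
    exact mul_le_mul_of_nonneg_left hlb (by positivity)
  -- bounded above
  have hbdd : ∀ m, y (m + 1) ≤ 30 - (225/19) * (6/25 : ℝ) ^ m := by
    intro m
    induction m with
    | zero =>
      have : y 1 = 6 * x 1 := by simp [hy]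
      rw [this]
      have := h3 0
      norm_num
      linarith
    | succ n ih =>
      have hx1 := (hb (n+1)).1
      have hub := f_ub6 hx1 (h3 n)
      have hstep : y (n+2) ≤ y (n+1) + 6^n * (x (n+1))^2 := by
        have : y (n+2) = 6^(n+2) * (3 - Real.sqrt (9 - x (n+1))) := by
          simp [hy, hrec (n+1)]
        rw [this]
        have : (6:ℝ)^(n+2) * (x (n+1)/6 + (x (n+1))^2/36) =
            6^(n+1) * x (n+1) + 6^n * (x (n+1))^2 := by ring
        have h := mul_le_mul_of_nonneg_left hub (by positivity : (0:ℝ) ≤ 6^(n+2))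
        simp only [hy]
        nlinarith
      have hsq : (6:ℝ)^n * (x (n+1))^2 ≤ 9 * (6/25)^n := by
        have hg := hgeo n
        have : (x (n+1))^2 ≤ (3 * (1/5:ℝ)^n)^2 :=
          pow_le_pow_left₀ hx1 hg 2
        calc (6:ℝ)^n * (x (n+1))^2 ≤ 6^n * (3 * (1/5:ℝ)^n)^2 := by
              exact mul_le_mul_of_nonneg_left this (by positivity)
          _ = 9 * (6/25)^n := by
              have e : ((1/5:ℝ)^n)^2 = (1/25)^n := by
                rw [← pow_mul, mul_comm, pow_mul]; norm_num
              rw [mul_pow, e, show (6/25:ℝ) = 6 * (1/25) by norm_num, mul_pow]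
              ring
      have : (30 : ℝ) - 225/19 * (6/25)^(n+1) =
          (30 - 225/19 * (6/25)^n) + 9 * (6/25)^n := by ring
      rw [this]
      linarith
  have hBdd : BddAbove (Set.range y) := by
    refine ⟨30, ?_⟩
    rintro _ ⟨m, rfl⟩
    cases m with
    | zero => simp [hy, hx0]; linarith
    | succ n =>
      have := hbdd n
      have hp : (0:ℝ) ≤ (6/25:ℝ)^n := by positivity
      nlinarith
  exact ⟨⨆ m, y m, tendsto_atTop_ciSup hmono hBdd⟩
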